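/- Let Q̄*-set be the set of optimal world Q-value functions for tasks in M (tasks sharing the same background MDP). For all tasks M₁, M₂ ∈ M, the optimal world Q-value function of the disjunction task equals the pointwise maximum of the individual optimal world Q-value functions: Q̄*_{M₁ ∨ M₂}(s, g, a) = max{ Q̄*_{M₁}(s, g, a), Q̄*_{M₂}(s, g, a) } for all (s, g, a). (Theorem 5(i), disjunction) -/

import Mathlib

/-!
Formalisation of "World Value Functions" (WVFs).

We model a *task* as a Markov decision process with **deterministic** dynamics:
a transition function `δ : S → A → S`, a set of absorbing states
(`absorbing : S → Prop`; a transition *into* an absorbing state is a terminal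
transition), and a reward function `R s a` giving the reward `R(s, a, s')` of
the deterministic transition `s' = δ s a`.  After a terminal transition the
episode is over: absorbing states are frozen and yield reward `0`.

Values are undiscounted sums of rewards, taken in the extended reals `EReal`
(the return of a policy is the `liminf` of its partial sums of rewards, which
is the genuine sum whenever the episode terminates).
-/

open Filter

open scoped Classical

noncomputable section

/-- A task: a Markov decision process `(S, A, P, R)` with deterministic
transition dynamics. -/
structure DetMDP (S A : Type) where
  /-- the deterministic transition dynamics: `δ s a` is the next state -/
  δ : S → A → S
  /-- absorbing states; a transition into an absorbing state is terminal -/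
  absorbing : S → Prop
  /-- the reward `R s a = R(s, a, δ s a)` -/
  R : S → A → ℝ

namespace DetMDP

variable {S A : Type}

/-- The agent's internal goal space `G ⊆ S`: all states where the agent
experiences a terminal transition. -/
def goalSpace (M : DetMDP S A) : Set S :=
  {s | ∃ a, M.absorbing (M.δ s a)}

/-- The extended reward function
`R̄(s, g, a, s') = r̄_MIN` if `g ≠ s` and `s'` is absorbing, `R(s, a, s')`
otherwise (here `s' = δ s a` is determined by the deterministic dynamics). -/
def extR (M : DetMDP S A) (rmin : ℝ) (s g : S) (a : A) : ℝ :=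
  if g ≠ s ∧ M.absorbing (M.δ s a) then rmin else M.R s a

/-- One step of execution of a (deterministic, stationary) policy `π`;
absorbing states are frozen. -/
def stepTo (M : DetMDP S A) (π : S → A) (s : S) : S :=
  if M.absorbing s then s else M.δ s (π s)

/-- The (deterministic) state trajectory obtained by following `π` from `s`. -/
def traj (M : DetMDP S A) (π : S → A) (s : S) : ℕ → S
  | 0 => s
  | n + 1 => M.stepTo π (M.traj π s n)

/-- The reward (w.r.t. the reward function `r`) collected at time `t`
when following `π` from `s`; it is `0` once the episode has terminated. -/
def rew (M : DetMDP S A) (r : S → A → ℝ) (π : S → A) (s : S) (t : ℕ) : ℝ :=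
  if M.absorbing (M.traj π s t) then 0
  else r (M.traj π s t) (π (M.traj π s t))

/-- The undiscounted return `∑_{t=0}^∞ r_t` collected by `π` from `s`
(as an extended real number). -/
def ret (M : DetMDP S A) (r : S → A → ℝ) (π : S → A) (s : S) : EReal :=
  liminf (fun n => ((∑ t ∈ Finset.range n, M.rew r π s t : ℝ) : EReal)) atTop

/-- The value function `V^π` of a policy for the task. -/
def Vpol (M : DetMDP S A) (π : S → A) (s : S) : EReal :=
  M.ret M.R π s

/-- The action-value function `Q^π` of a policy for the task. -/
def Qpol (M : DetMDP S A) (π : S → A) (s : S) (a : A) : EReal :=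
  if M.absorbing s then 0 else (M.R s a : EReal) + M.ret M.R π (M.δ s a)

/-- The optimal value function `V*` of the task. -/
def Vstar (M : DetMDP S A) (s : S) : EReal :=
  ⨆ π : S → A, M.Vpol π s

/-- The optimal action-value function `Q*(s, a) = max_π Q^π(s, a)` of the task. -/
def Qstar (M : DetMDP S A) (s : S) (a : A) : EReal :=
  ⨆ π : S → A, M.Qpol π s a

/-- The return of the world policy `pibar : S × G → A` for goal `g` from `s`:
the undiscounted sum of extended rewards `R̄(·, g, ·)`. -/
def wRet (M : DetMDP S A) (rmin : ℝ) (pibar : S → S → A) (g s : S) : EReal :=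
  M.ret (fun x b => M.extR rmin x g b) (fun x => pibar x g) s

/-- The world action-value function `Q̄^pibar(s, g, a)` of a world policy. -/
def wQpol (M : DetMDP S A) (rmin : ℝ) (pibar : S → S → A) (s g : S) (a : A) : EReal :=
  if M.absorbing s then 0
  else (M.extR rmin s g a : EReal) + M.wRet rmin pibar g (M.δ s a)

/-- The optimal world action-value function (the WVF)
`Q̄*(s, g, a) = max_pibar Q̄^pibar(s, g, a)`. -/
def wQstar (M : DetMDP S A) (rmin : ℝ) (s g : S) (a : A) : EReal :=
  ⨆ pibar : S → S → A, M.wQpol rmin pibar s g a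

/-- The optimal world value function `V̄*(s, g) = max_a Q̄*(s, g, a)`. -/
def wVstar (M : DetMDP S A) (rmin : ℝ) (s g : S) : EReal :=
  ⨆ a : A, M.wQstar rmin s g a

/-- Following `π` from `s`, the episode terminates with terminal state `g`,
i.e. the terminal transition is experienced at `g` (`s_T = g`). -/
def reaches (M : DetMDP S A) (π : S → A) (s g : S) : Prop :=
  ∃ n, M.traj π s n = g ∧ M.absorbing (M.traj π s (n + 1))

/-- The probability `P^pibar_s(s_T = g)` of reaching goal `g` from `s` under a
world policy `pibar` (it is `0` or `1`, since everything is deterministic). -/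
def reachProb (M : DetMDP S A) (pibar : S → S → A) (s g : S) : ℝ :=
  if M.reaches (fun x => pibar x g) s g then 1 else 0

/-- `g` is reachable from `s`. -/
def reachable (M : DetMDP S A) (s g : S) : Prop :=
  ∃ π : S → A, M.reaches π s g

/-- The penalty `rmin` (`r̄_MIN`) is strictly smaller than the least possible
return of the task. -/
def PenaltyOK (M : DetMDP S A) (rmin : ℝ) : Prop :=
  ∀ (π : S → A) (s : S), (rmin : EReal) < M.ret M.R π s

/-- `τ` is a task-specific reward function over the background MDP `M₀`:
it is non-zero only for transitions entering terminal (absorbing) states. -/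
def IsTaskReward (M₀ : DetMDP S A) (τ : S → A → ℝ) : Prop :=
  ∀ s a, ¬ M₀.absorbing (M₀.δ s a) → τ s a = 0

/-- The task over the background MDP (world) `M₀` specified by a task-specific
reward `τ`: the same state space, action space and dynamics as `M₀`, with
reward function `R_M = R₀ + R_M^τ`. -/
def withTask (M₀ : DetMDP S A) (τ : S → A → ℝ) : DetMDP S A :=
  { δ := M₀.δ, absorbing := M₀.absorbing, R := fun s a => M₀.R s a + τ s a }

/-- `τ` is a task of the world `M₀` whose terminal rewards lie in `[Rlo, Rhi]`. -/
def InWorld (M₀ : DetMDP S A) (Rlo Rhi : ℝ) (τ : S → A → ℝ) : Prop :=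
  M₀.IsTaskReward τ ∧ ∀ s a, M₀.absorbing (M₀.δ s a) → Rlo ≤ τ s a ∧ τ s a ≤ Rhi

/-- The task-specific reward of the maximum task `M_SUP`: terminal reward
`R_MAX` at all goals in `G`. -/
def tauSup (M₀ : DetMDP S A) (Rhi : ℝ) : S → A → ℝ :=
  fun s a => if M₀.absorbing (M₀.δ s a) then Rhi else 0

/-- The task-specific reward of the minimum task `M_INF`: terminal reward
`R_MIN` at all goals in `G`. -/
def tauInf (M₀ : DetMDP S A) (Rlo : ℝ) : S → A → ℝ :=
  fun s a => if M₀.absorbing (M₀.δ s a) then Rlo else 0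

/-- The task-specific reward of the negated task `¬M`:
`R_{¬M} = (R_{M_SUP} + R_{M_INF}) − R_M`. -/
def tauNot (M₀ : DetMDP S A) (Rlo Rhi : ℝ) (τ : S → A → ℝ) : S → A → ℝ :=
  fun s a => M₀.tauSup Rhi s a + M₀.tauInf Rlo s a - τ s a

/-! ### Auxiliary lemmas for Theorem 5(i) -/

section AuxOr

variable (M₀ : DetMDP S A)

lemma withTask_stepTo (τ : S → A → ℝ) (π : S → A) :
    (M₀.withTask τ).stepTo π = M₀.stepTo π := rfl

lemma withTask_traj (τ : S → A → ℝ) (π : S → A) (s : S) (n : ℕ) :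
    (M₀.withTask τ).traj π s n = M₀.traj π s n := by
  induction n with
  | zero => rfl
  | succ n ih => simp only [traj, ih, withTask_stepTo]

lemma absorbing_traj_succ (π : S → A) (s : S) {n : ℕ}
    (h : M₀.absorbing (M₀.traj π s n)) : M₀.absorbing (M₀.traj π s (n + 1)) := by
  simp only [traj, stepTo, if_pos h]; exact h

lemma absorbing_traj_mono (π : S → A) (s : S) {n m : ℕ} (h : n ≤ m)
    (ha : M₀.absorbing (M₀.traj π s n)) : M₀.absorbing (M₀.traj π s m) := by
  induction m with
  | zero => exact Nat.le_zero.mp h ▸ ha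
  | succ m ih =>
    rcases Nat.lt_or_ge n (m + 1) with hlt | hge
    · exact M₀.absorbing_traj_succ π s (ih (Nat.lt_succ_iff.mp hlt))
    · exact Nat.le_antisymm h hge ▸ ha

/-- The "goal hit" predicate: at time `t` the trajectory experiences the
terminal transition at the goal `g`. -/
def hitAt (π : S → A) (g s : S) (t : ℕ) : Prop :=
  ¬ M₀.absorbing (M₀.traj π s t) ∧ g = M₀.traj π s t ∧
    M₀.absorbing (M₀.δ (M₀.traj π s t) (π (M₀.traj π s t)))

lemma absorbing_of_hitAt {π : S → A} {g s : S} {t u : ℕ} (h : M₀.hitAt π g s t)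
    (hu : t < u) : M₀.absorbing (M₀.traj π s u) := by
  have h1 : M₀.absorbing (M₀.traj π s (t + 1)) := by
    simp only [traj, stepTo, if_neg h.1]; exact h.2.2
  exact M₀.absorbing_traj_mono π s hu h1

lemma hitAt_unique {π : S → A} {g s : S} {t u : ℕ} (h : M₀.hitAt π g s t)
    (hu : M₀.hitAt π g s u) : t = u := by
  by_contra hne
  rcases Nat.lt_or_ge t u with hlt | hge
  · exact hu.1 (M₀.absorbing_of_hitAt h hlt)
  · exact h.1 (M₀.absorbing_of_hitAt hu (lt_of_le_of_ne hge (Ne.symm hne)))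

/-- The `τ`-independent part of the reward along a trajectory. -/
noncomputable def baseRew (rmin : ℝ) (π : S → A) (g s : S) (t : ℕ) : ℝ :=
  if M₀.absorbing (M₀.traj π s t) then 0
  else if M₀.absorbing (M₀.δ (M₀.traj π s t) (π (M₀.traj π s t))) then
    (if g = M₀.traj π s t then M₀.R (M₀.traj π s t) (π (M₀.traj π s t)) else rmin)
  else M₀.R (M₀.traj π s t) (π (M₀.traj π s t))

lemma rew_withTask (rmin : ℝ) {τ : S → A → ℝ} (hτ : M₀.IsTaskReward τ)
    (π : S → A) (g s : S) (t : ℕ) :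
    (M₀.withTask τ).rew (fun x b => (M₀.withTask τ).extR rmin x g b) π s t =
      M₀.baseRew rmin π g s t +
        (if M₀.hitAt π g s t then τ (M₀.traj π s t) (π (M₀.traj π s t)) else 0) := by
  have htraj := M₀.withTask_traj τ π s t
  simp only [rew, extR, baseRew, hitAt, htraj]
  set st := M₀.traj π s t
  simp only [← show st = M₀.traj π s t from rfl] at *
  by_cases h1 : M₀.absorbing st
  · have : ¬ (¬M₀.absorbing st ∧ g = st ∧ M₀.absorbing (M₀.δ st (π st))) := by
      intro h; exact h.1 h1
    simp only [withTask] at *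
    simp [h1, this]
  · by_cases h2 : M₀.absorbing (M₀.δ st (π st))
    · by_cases h3 : g = st
      · have hne : ¬ (g ≠ st ∧ M₀.absorbing (M₀.δ st (π st))) := by
          intro h; exact h.1 h3
        simp only [withTask] at *
        simp [h1, h2, h3, hne]
      · have hne : (g ≠ st ∧ M₀.absorbing (M₀.δ st (π st))) := ⟨h3, h2⟩
        have : ¬ (¬M₀.absorbing st ∧ g = st ∧ M₀.absorbing (M₀.δ st (π st))) := by
          intro h; exact h3 h.2.1
        simp only [withTask] at *
        simp [h1, h2, h3, hne, this]
    · have hne : ¬ (g ≠ st ∧ M₀.absorbing (M₀.δ st (π st))) := by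
        intro h; exact h2 h.2
      have hz : τ st (π st) = 0 := hτ st (π st) h2
      have : ¬ (¬M₀.absorbing st ∧ g = st ∧ M₀.absorbing (M₀.δ st (π st))) := by
        intro h; exact h2 h.2.2
      simp only [withTask] at *
      simp [h1, h2, hne, hz, this]

lemma ret_absorbing (M : DetMDP S A) (r : S → A → ℝ) (π : S → A) (s : S)
    (h : M.absorbing s) : M.ret r π s = 0 := by
  have htraj : ∀ n, M.absorbing (M.traj π s n) := by
    intro n
    induction n with
    | zero => exact h
    | succ n ih => simp only [traj, stepTo, if_pos ih]; exact ih
  have hrew : ∀ t, M.rew r π s t = 0 := fun t => by simp [rew, htraj t]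
  have : (fun n => ((∑ t ∈ Finset.range n, M.rew r π s t : ℝ) : EReal)) =
      fun _ => (0 : EReal) := by
    funext n; simp [hrew]
  simp [ret, this, liminf_const]

/-- If the trajectory hits the goal at time `t₀`, the return is the finite sum
up to time `t₀`. -/
lemma ret_of_hitAt {rmin : ℝ} {τ : S → A → ℝ} (hτ : M₀.IsTaskReward τ)
    {π : S → A} {g s : S} {t₀ : ℕ} (h : M₀.hitAt π g s t₀) :
    (M₀.withTask τ).ret (fun x b => (M₀.withTask τ).extR rmin x g b) π s =
      ((∑ u ∈ Finset.range (t₀ + 1),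
        ((M₀.baseRew rmin π g s u) +
          (if M₀.hitAt π g s u then τ (M₀.traj π s u) (π (M₀.traj π s u)) else 0)) : ℝ) :
        EReal) := by
  set F : ℕ → ℝ := fun u => (M₀.baseRew rmin π g s u) +
      (if M₀.hitAt π g s u then τ (M₀.traj π s u) (π (M₀.traj π s u)) else 0) with hF
  have hrew : ∀ t, (M₀.withTask τ).rew
      (fun x b => (M₀.withTask τ).extR rmin x g b) π s t = F t :=
    fun t => M₀.rew_withTask rmin hτ π g s t
  have hzero : ∀ u, t₀ < u → F u = 0 := by
    intro u hu
    have habs : M₀.absorbing (M₀.traj π s u) := M₀.absorbing_of_hitAt h hu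
    have hnh : ¬ M₀.hitAt π g s u := fun hh => hh.1 habs
    simp [hF, baseRew, habs, hnh]
  have hev : ∀ n, t₀ + 1 ≤ n →
      (∑ t ∈ Finset.range n, F t) = ∑ u ∈ Finset.range (t₀ + 1), F u := by
    intro n hn
    rw [eq_comm]
    apply Finset.sum_subset (Finset.range_subset_range.2 hn)
    intro x hx hnx
    simp only [Finset.mem_range] at hx hnx
    exact hzero x (by omega)
  have hcong : (fun n => ((∑ t ∈ Finset.range n,
        (M₀.withTask τ).rew (fun x b => (M₀.withTask τ).extR rmin x g b) π s t : ℝ) : EReal))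
      =ᶠ[atTop] fun _ => ((∑ u ∈ Finset.range (t₀ + 1), F u : ℝ) : EReal) := by
    filter_upwards [eventually_ge_atTop (t₀ + 1)] with n hn
    simp only [hrew, hev n hn]
  rw [ret, liminf_congr hcong, liminf_const]

/-- If the trajectory never hits the goal, the return does not depend on `τ`. -/
lemma ret_of_not_hitAt {rmin : ℝ} {τ : S → A → ℝ} (hτ : M₀.IsTaskReward τ)
    {π : S → A} {g s : S} (h : ∀ t, ¬ M₀.hitAt π g s t) :
    (M₀.withTask τ).ret (fun x b => (M₀.withTask τ).extR rmin x g b) π s =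
      liminf (fun n => ((∑ t ∈ Finset.range n, M₀.baseRew rmin π g s t : ℝ) : EReal)) atTop := by
  have hrew : ∀ t, (M₀.withTask τ).rew
      (fun x b => (M₀.withTask τ).extR rmin x g b) π s t = M₀.baseRew rmin π g s t := by
    intro t
    rw [M₀.rew_withTask rmin hτ π g s t, if_neg (h t), add_zero]
  simp only [ret, hrew]

lemma isTaskReward_max {τ₁ τ₂ : S → A → ℝ} (h₁ : M₀.IsTaskReward τ₁)
    (h₂ : M₀.IsTaskReward τ₂) :
    M₀.IsTaskReward (fun s a => max (τ₁ s a) (τ₂ s a)) := by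
  intro s a h
  simp [h₁ s a h, h₂ s a h]

lemma ereal_add_max (r x y : EReal) : r + max x y = max (r + x) (r + y) := by
  rcases le_total x y with h | h
  · rw [max_eq_right h, max_eq_right (add_le_add_right h r)]
  · rw [max_eq_left h, max_eq_left (add_le_add_right h r)]

lemma ereal_coe_max (x y : ℝ) : ((max x y : ℝ) : EReal) = max (x : EReal) (y : EReal) := by
  rcases le_total x y with h | h
  · rw [max_eq_right h, max_eq_right (EReal.coe_le_coe_iff.2 h)]
  · rw [max_eq_left h, max_eq_left (EReal.coe_le_coe_iff.2 h)]

/-- The key pointwise identity: the return of the disjunction task is the max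
of the returns. -/
lemma ret_max {rmin : ℝ} {τ₁ τ₂ : S → A → ℝ} (h₁ : M₀.IsTaskReward τ₁)
    (h₂ : M₀.IsTaskReward τ₂) (π : S → A) (g s : S) :
    (M₀.withTask (fun x b => max (τ₁ x b) (τ₂ x b))).ret
        (fun x b => (M₀.withTask (fun x b => max (τ₁ x b) (τ₂ x b))).extR rmin x g b) π s =
      max ((M₀.withTask τ₁).ret (fun x b => (M₀.withTask τ₁).extR rmin x g b) π s)
        ((M₀.withTask τ₂).ret (fun x b => (M₀.withTask τ₂).extR rmin x g b) π s) := by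
  have hmax := M₀.isTaskReward_max h₁ h₂
  by_cases hhit : ∃ t₀, M₀.hitAt π g s t₀
  · obtain ⟨t₀, ht₀⟩ := hhit
    have key : ∀ (τ : S → A → ℝ), M₀.IsTaskReward τ →
        (M₀.withTask τ).ret (fun x b => (M₀.withTask τ).extR rmin x g b) π s =
        (((∑ u ∈ Finset.range (t₀ + 1), M₀.baseRew rmin π g s u) +
          τ (M₀.traj π s t₀) (π (M₀.traj π s t₀)) : ℝ) : EReal) := by
      intro τ hτ
      rw [M₀.ret_of_hitAt hτ ht₀, Finset.sum_add_distrib]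
      congr 1
      have : ∀ u ∈ Finset.range (t₀ + 1),
          (if M₀.hitAt π g s u then τ (M₀.traj π s u) (π (M₀.traj π s u)) else 0) =
          (if u = t₀ then τ (M₀.traj π s t₀) (π (M₀.traj π s t₀)) else 0) := by
        intro u _
        by_cases hu : u = t₀
        · subst hu; simp [ht₀]
        · have : ¬ M₀.hitAt π g s u := fun hh => hu (M₀.hitAt_unique hh ht₀)
          simp [hu, this]
      rw [Finset.sum_congr rfl this, Finset.sum_ite_eq' (Finset.range (t₀ + 1))]
      simp
    rw [key _ hmax, key _ h₁, key _ h₂]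
    have hmm : ((∑ u ∈ Finset.range (t₀ + 1), M₀.baseRew rmin π g s u) +
        max (τ₁ (M₀.traj π s t₀) (π (M₀.traj π s t₀)))
          (τ₂ (M₀.traj π s t₀) (π (M₀.traj π s t₀))) : ℝ) =
        max ((∑ u ∈ Finset.range (t₀ + 1), M₀.baseRew rmin π g s u) +
            τ₁ (M₀.traj π s t₀) (π (M₀.traj π s t₀)))
          ((∑ u ∈ Finset.range (t₀ + 1), M₀.baseRew rmin π g s u) +
            τ₂ (M₀.traj π s t₀) (π (M₀.traj π s t₀))) := (max_add_add_left _ _ _).symm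
    rw [hmm, ereal_coe_max]
  · push_neg at hhit
    rw [M₀.ret_of_not_hitAt hmax hhit, M₀.ret_of_not_hitAt h₁ hhit,
      M₀.ret_of_not_hitAt h₂ hhit, max_self]

end AuxOr

/-- **Theorem 5(i), disjunction**: for all tasks `M₁, M₂` of the world, the
optimal world `Q`-value function of the disjunction task
(`R_{M₁ ∨ M₂} = max{R_{M₁}, R_{M₂}}`) is the pointwise maximum:
`Q̄*_{M₁ ∨ M₂}(s, g, a) = max{Q̄*_{M₁}(s, g, a), Q̄*_{M₂}(s, g, a)}`
for all `(s, g, a)`. -/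
theorem wQstar_or [Fintype S] [Fintype A] [Nonempty A]
    (M₀ : DetMDP S A) (rmin Rlo Rhi : ℝ) (τ₁ τ₂ : S → A → ℝ)
    (h₁ : M₀.InWorld Rlo Rhi τ₁) (h₂ : M₀.InWorld Rlo Rhi τ₂)
    (hpen : ∀ τ : S → A → ℝ, M₀.InWorld Rlo Rhi τ → (M₀.withTask τ).PenaltyOK rmin) :
    ∀ (s g : S) (a : A),
      (M₀.withTask (fun s' a' => max (τ₁ s' a') (τ₂ s' a'))).wQstar rmin s g a =
        max ((M₀.withTask τ₁).wQstar rmin s g a) ((M₀.withTask τ₂).wQstar rmin s g a) := by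
  intro s g a
  obtain ⟨hτ₁, -⟩ := h₁
  obtain ⟨hτ₂, -⟩ := h₂
  have hmax := M₀.isTaskReward_max hτ₁ hτ₂
  -- pointwise identity at the level of world policies
  have key : ∀ pibar : S → S → A,
      (M₀.withTask (fun s' a' => max (τ₁ s' a') (τ₂ s' a'))).wQpol rmin pibar s g a =
      max ((M₀.withTask τ₁).wQpol rmin pibar s g a)
        ((M₀.withTask τ₂).wQpol rmin pibar s g a) := by
    intro pibar
    set π : S → A := fun x => pibar x g with hπ
    by_cases habs : M₀.absorbing s
    · simp only [wQpol, withTask, if_pos habs, habs, ↓reduceIte, max_self]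
    · have hwret := M₀.ret_max (rmin := rmin) hτ₁ hτ₂ π g (M₀.δ s (pibar s g))
      simp only [wQpol, withTask, if_neg habs, habs, ↓reduceIte, wRet]
      by_cases hterm : M₀.absorbing (M₀.δ s a)
      · -- the first transition is terminal: returns from the absorbing state are 0
        have hz : ∀ τ : S → A → ℝ,
            (M₀.withTask τ).ret (fun x b => (M₀.withTask τ).extR rmin x g b) π
              (M₀.δ s a) = 0 := fun τ =>
          (M₀.withTask τ).ret_absorbing _ _ _ hterm
        simp only [withTask] at hz
        rw [hz, hz, hz, add_zero, add_zero, add_zero]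
        by_cases hg : g = s
        · have hcond : ¬ (g ≠ s ∧ M₀.absorbing (M₀.δ s a)) := fun h => h.1 hg
          simp only [extR, withTask, if_neg hcond]
          rw [show M₀.R s a + max (τ₁ s a) (τ₂ s a) =
              max (M₀.R s a + τ₁ s a) (M₀.R s a + τ₂ s a) from (max_add_add_left _ _ _).symm]
          exact ereal_coe_max _ _
        · have hcond : (g ≠ s ∧ M₀.absorbing (M₀.δ s a)) := ⟨hg, hterm⟩
          simp only [extR, withTask, if_pos hcond, max_self]
      · -- non-terminal first transition: the extended reward is the background reward
        have hcond : ¬ (g ≠ s ∧ M₀.absorbing (M₀.δ s a)) := fun h => hterm h.2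
        have hret := M₀.ret_max (rmin := rmin) hτ₁ hτ₂ π g (M₀.δ s a)
        simp only [extR, withTask, if_neg hcond, hτ₁ s a hterm, hτ₂ s a hterm,
          max_self, add_zero] at *
        rw [hπ] at hret
        exact (congrArg (fun x => (M₀.R s a : EReal) + x) hret).trans (ereal_add_max _ _ _)
  simp only [wQstar, key]
  exact iSup_sup_eq

end DetMDP
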